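/- arXiv:1305.3728 — 2 statements merged into one kernel-verified Lean document; each statement's English description precedes it below -/
import Mathlib

section
/- Identifiability lower bound on a small interval: under the assumptions below there exists δ_0 ∈ (0,T] such that for every δ ∈ (0, δ_0] and every pair ϑ, ϑ_0 ∈ Θ, ∫_0^δ ( x(ϑ,t) − x(ϑ_0,t) )² dt ≥ γ² δ³ (ϑ − ϑ_0)² / 6. -/
open Real MeasureTheory intervalIntegral

/-- Identifiability lower bound on a small interval: under the regularity and
non-degeneracy assumptions below there exists `δ₀ ∈ (0,T]` such that for every `δ ∈ (0,δ₀]` and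
every pair `ϑ, ϑ₀` in the compact parameter interval `Θ = [α,β]`,
`∫_0^δ (x(ϑ,t) − x(ϑ₀,t))² dt ≥ γ² δ³ (ϑ − ϑ₀)² / 6`. -/
theorem identifiability_small_interval_lower_bound
    (T x0 α β γ : ℝ) (hT : 0 < T) (hαβ : α < β) (hγ : 0 < γ)
    (S Sθ Sx : ℝ → ℝ → ℝ → ℝ)
    (U : Set (ℝ × ℝ × ℝ)) (hU : IsOpen U)
    (hUmem : ∀ ϑ ∈ Set.Icc α β, ∀ t ∈ Set.Icc (0 : ℝ) T, ∀ y : ℝ, (ϑ, t, y) ∈ U)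
    (hScont : ContinuousOn (fun q : ℝ × ℝ × ℝ => S q.1 q.2.1 q.2.2) U)
    (hSθ : ∀ q ∈ U, HasDerivAt (fun a => S a q.2.1 q.2.2) (Sθ q.1 q.2.1 q.2.2) q.1)
    (hSx : ∀ q ∈ U, HasDerivAt (fun z => S q.1 q.2.1 z) (Sx q.1 q.2.1 q.2.2) q.2.2)
    (hSθcont : ContinuousOn (fun q : ℝ × ℝ × ℝ => Sθ q.1 q.2.1 q.2.2) U)
    (hSxcont : ContinuousOn (fun q : ℝ × ℝ × ℝ => Sx q.1 q.2.1 q.2.2) U)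
    (x xdot : ℝ → ℝ → ℝ)
    (hx0 : ∀ ϑ ∈ Set.Icc α β, x ϑ 0 = x0)
    (hxode : ∀ ϑ ∈ Set.Icc α β, ∀ t ∈ Set.Icc (0 : ℝ) T,
      HasDerivAt (fun s => x ϑ s) (S ϑ t (x ϑ t)) t)
    (hxdot : ∀ ϑ ∈ Set.Icc α β, ∀ t ∈ Set.Icc (0 : ℝ) T,
      HasDerivAt (fun a => x a t) (xdot ϑ t) ϑ)
    (hxdotcont : ContinuousOn (fun q : ℝ × ℝ => xdot q.1 q.2)
      (Set.Icc α β ×ˢ Set.Icc (0 : ℝ) T))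
    (hvar : ∀ ϑ ∈ Set.Icc α β, ∀ t ∈ Set.Icc (0 : ℝ) T,
      xdot ϑ t = ∫ s in (0 : ℝ)..t,
        Real.exp (∫ r in s..t, Sx ϑ r (x ϑ r)) * Sθ ϑ s (x ϑ s))
    (hnondeg : ∀ ϑ ∈ Set.Icc α β, γ ≤ Sθ ϑ 0 x0) :
    ∃ δ₀ : ℝ, 0 < δ₀ ∧ δ₀ ≤ T ∧
      ∀ δ : ℝ, 0 < δ → δ ≤ δ₀ →
        ∀ ϑ ∈ Set.Icc α β, ∀ ϑ₀ ∈ Set.Icc α β,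
          γ ^ 2 * δ ^ 3 * (ϑ - ϑ₀) ^ 2 / 6 ≤
            ∫ t in (0 : ℝ)..δ, (x ϑ t - x ϑ₀ t) ^ 2 := by
  set K : Set ℝ := Set.Icc α β with hKdef
  set I : Set ℝ := Set.Icc (0 : ℝ) T with hIdef
  have hPc : IsCompact (K ×ˢ I) := isCompact_Icc.prod isCompact_Icc
  have h0I : (0 : ℝ) ∈ I := Set.mem_Icc.2 ⟨le_refl _, hT.le⟩
  -- constants
  have hsqrt2 : (1 : ℝ) < Real.sqrt 2 := by
    have := Real.sqrt_lt_sqrt (by norm_num : (0:ℝ) ≤ 1) (by norm_num : (1:ℝ) < 2)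
    simpa using this
  set c : ℝ := γ / Real.sqrt 2 with hcdef
  have hcpos : 0 < c := div_pos hγ (by linarith)
  have hcγ : c < γ := div_lt_self hγ hsqrt2
  set γ' : ℝ := (γ + c) / 2 with hγ'def
  have hγ'pos : 0 < γ' := by positivity
  have hcγ' : c < γ' := by simp only [hγ'def]; linarith
  have hγ'γ : γ' < γ := by simp only [hγ'def]; linarith
  set ε : ℝ := γ - γ' with hεdef
  have hεpos : 0 < ε := by simp only [hεdef]; linarith
  -- joint continuity of x on K ×ˢ I
  obtain ⟨M, hM⟩ := hPc.exists_bound_of_continuousOn hxdotcont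
  have hXcont : ContinuousOn (fun q : ℝ × ℝ => x q.1 q.2) (K ×ˢ I) := by
    apply continuousOn_prod_of_continuousOn_lipschitzOnWith _ (Real.toNNReal M)
    · intro a ha
      intro t ht
      exact (hxode a ha t ht).continuousAt.continuousWithinAt
    · intro t ht
      apply (convex_Icc α β).lipschitzOnWith_of_nnnorm_hasDerivWithin_le
        (f' := fun a => xdot a t)
        (fun a ha => (hxdot a ha t ht).hasDerivWithinAt)
      intro a ha
      have := hM (a, t) ⟨ha, ht⟩
      rw [← Real.toNNReal_coe (r := ‖xdot a t‖₊)]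
      exact Real.toNNReal_mono (by simpa using this)
  -- compositions
  have hmap : ContinuousOn (fun q : ℝ × ℝ => (q.1, q.2, x q.1 q.2)) (K ×ˢ I) := by
    exact (continuousOn_fst.prodMk (continuousOn_snd.prodMk hXcont))
  have hmapsto : ∀ q ∈ K ×ˢ I, (q.1, q.2, x q.1 q.2) ∈ U := by
    rintro ⟨a, t⟩ ⟨ha, ht⟩
    exact hUmem a ha t ht _
  have hφcont : ContinuousOn (fun q : ℝ × ℝ => Sθ q.1 q.2 (x q.1 q.2)) (K ×ˢ I) :=
    hSθcont.comp hmap hmapsto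
  have hψcont : ContinuousOn (fun q : ℝ × ℝ => Sx q.1 q.2 (x q.1 q.2)) (K ×ˢ I) :=
    hSxcont.comp hmap hmapsto
  -- bound on Sx composed
  obtain ⟨B₀, hB₀⟩ := hPc.exists_bound_of_continuousOn hψcont
  set B : ℝ := max B₀ 1 with hBdef
  have hBpos : 0 < B := lt_of_lt_of_le one_pos (le_max_right _ _)
  have hB : ∀ a ∈ K, ∀ t ∈ I, |Sx a t (x a t)| ≤ B := by
    intro a ha t ht
    exact le_trans (by simpa using hB₀ (a, t) ⟨ha, ht⟩) (le_max_left _ _)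
  -- uniform continuity of φ
  obtain ⟨δ₁, hδ₁pos, hδ₁⟩ := Metric.uniformContinuousOn_iff_le.1
    (hPc.uniformContinuousOn_of_continuous hφcont) ε hεpos
  -- choose δ₀
  set L : ℝ := Real.log (γ' / c) / B with hLdef
  have hLpos : 0 < L := by
    apply div_pos _ hBpos
    apply Real.log_pos
    rw [lt_div_iff₀ hcpos]; linarith
  set δ₀ : ℝ := min T (min δ₁ L) with hδ₀def
  have hδ₀pos : 0 < δ₀ := lt_min hT (lt_min hδ₁pos hLpos)
  have hδ₀T : δ₀ ≤ T := min_le_left _ _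
  have hδ₀δ₁ : δ₀ ≤ δ₁ := le_trans (min_le_right _ _) (min_le_left _ _)
  have hδ₀L : δ₀ ≤ L := le_trans (min_le_right _ _) (min_le_right _ _)
  -- Step: lower bound on Sθ near time 0
  have hφlb : ∀ a ∈ K, ∀ s : ℝ, 0 ≤ s → s ≤ δ₀ → γ' ≤ Sθ a s (x a s) := by
    intro a ha s hs0 hsδ
    have hsI : s ∈ I := Set.mem_Icc.2 ⟨hs0, le_trans hsδ hδ₀T⟩
    have hd : dist ((a, s) : ℝ × ℝ) ((a, 0) : ℝ × ℝ) ≤ δ₁ := by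
      rw [Prod.dist_eq]
      simp only [dist_self, Real.dist_eq]
      rw [max_le_iff]
      refine ⟨hδ₁pos.le, ?_⟩
      rw [abs_of_nonneg (by linarith)]
      linarith
    have := hδ₁ (a, s) ⟨ha, hsI⟩ (a, 0) ⟨ha, h0I⟩ hd
    have hval : Sθ a 0 (x a 0) = Sθ a 0 x0 := by rw [hx0 a ha]
    have hγle : γ ≤ Sθ a 0 (x a 0) := hval ▸ hnondeg a ha
    have habs : |Sθ a s (x a s) - Sθ a 0 (x a 0)| ≤ ε := by
      simpa [Real.dist_eq] using this
    have := abs_le.1 habs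
    linarith [this.1]
  -- Step: key lower bound on xdot
  have hxdotlb : ∀ a ∈ K, ∀ t : ℝ, 0 ≤ t → t ≤ δ₀ → c * t ≤ xdot a t := by
    intro a ha t ht0 htδ
    have htI : t ∈ I := Set.mem_Icc.2 ⟨ht0, le_trans htδ hδ₀T⟩
    rw [hvar a ha t htI]
    have hcont_s : ContinuousOn (fun s : ℝ =>
        Real.exp (∫ r in s..t, Sx a r (x a r)) * Sθ a s (x a s)) (Set.Icc 0 t) := by
      have hsubI : Set.Icc (0:ℝ) t ⊆ I :=
        Set.Icc_subset_Icc le_rfl (le_trans htδ hδ₀T)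
      have hψa : ContinuousOn (fun r : ℝ => Sx a r (x a r)) (Set.Icc 0 t) := by
        have hcr : ContinuousOn (fun r : ℝ => ((a, r) : ℝ × ℝ)) (Set.Icc 0 t) :=
          (continuous_const.prodMk continuous_id).continuousOn
        exact hψcont.comp hcr (fun r hr => ⟨ha, hsubI hr⟩)
      have hprim : ContinuousOn (fun s : ℝ => ∫ r in s..t, Sx a r (x a r)) (Set.Icc 0 t) := by
        have h1 := intervalIntegral.continuousOn_primitive_interval_left
          (f := fun r => Sx a r (x a r)) (a := 0) (b := t) (μ := volume)
          (by rw [Set.uIcc_of_le ht0]; exact hψa.integrableOn_Icc)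
        rwa [Set.uIcc_of_le ht0] at h1
      have hφa : ContinuousOn (fun s : ℝ => Sθ a s (x a s)) (Set.Icc 0 t) := by
        have hcr : ContinuousOn (fun r : ℝ => ((a, r) : ℝ × ℝ)) (Set.Icc 0 t) :=
          (continuous_const.prodMk continuous_id).continuousOn
        exact hφcont.comp hcr (fun r hr => ⟨ha, hsubI hr⟩)
      exact hprim.rexp.mul hφa
    have hlbpt : ∀ s ∈ Set.Icc (0:ℝ) t,
        c ≤ Real.exp (∫ r in s..t, Sx a r (x a r)) * Sθ a s (x a s) := by
      intro s hs
      have hs0 : (0:ℝ) ≤ s := hs.1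
      have hst : s ≤ t := hs.2
      -- bound the exponent
      have hintbd : |∫ r in s..t, Sx a r (x a r)| ≤ B * |t - s| := by
        rw [← Real.norm_eq_abs]
        apply intervalIntegral.norm_integral_le_of_norm_le_const
        intro r hr
        rw [Set.uIoc_of_le hst] at hr
        exact hB a ha r (Set.mem_Icc.2 ⟨le_trans hs0 hr.1.le,
          le_trans hr.2 (le_trans htδ hδ₀T)⟩)
      have hBt : B * |t - s| ≤ Real.log (γ' / c) := by
        have h1 : |t - s| ≤ δ₀ := by
          rw [abs_of_nonneg (by linarith)]; linarith
        have h2 : B * δ₀ ≤ Real.log (γ' / c) := by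
          have := (le_div_iff₀ hBpos).1 hδ₀L
          linarith
        have h3 : B * |t - s| ≤ B * δ₀ :=
          mul_le_mul_of_nonneg_left h1 hBpos.le
        linarith
      have hexplb : c / γ' ≤ Real.exp (∫ r in s..t, Sx a r (x a r)) := by
        have h2 : -(Real.log (γ' / c)) ≤ ∫ r in s..t, Sx a r (x a r) := by
          have := (abs_le.1 hintbd).1
          linarith
        calc c / γ' = Real.exp (-(Real.log (γ' / c))) := by
              rw [Real.exp_neg, Real.exp_log (by positivity)]
              rw [inv_div]
          _ ≤ _ := Real.exp_le_exp.2 h2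
      have hφs : γ' ≤ Sθ a s (x a s) := hφlb a ha s hs0 (le_trans hst htδ)
      calc c = (c / γ') * γ' := by field_simp
        _ ≤ _ := by
            apply mul_le_mul hexplb hφs hγ'pos.le (Real.exp_pos _).le
    calc c * t = ∫ _ in (0:ℝ)..t, c := by
          rw [intervalIntegral.integral_const]; ring_nf
      _ ≤ _ := by
          apply intervalIntegral.integral_mono_on ht0 intervalIntegrable_const
            ((hcont_s.mono (by rw [Set.uIcc_of_le ht0])).intervalIntegrable) hlbpt
  -- Step: lower bound on the difference, for ordered parameters
  have hdiff : ∀ ϑ ∈ K, ∀ ϑ₀ ∈ K, ϑ₀ ≤ ϑ → ∀ t : ℝ, 0 ≤ t → t ≤ δ₀ →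
      c * t * (ϑ - ϑ₀) ≤ x ϑ t - x ϑ₀ t := by
    intro ϑ hϑ ϑ₀ hϑ₀ hle t ht0 htδ
    have htI : t ∈ I := Set.mem_Icc.2 ⟨ht0, le_trans htδ hδ₀T⟩
    have hsub : Set.uIcc ϑ₀ ϑ ⊆ K := by
      rw [Set.uIcc_of_le hle]
      exact Set.Icc_subset_Icc hϑ₀.1 hϑ.2
    have hcontd : ContinuousOn (fun a => xdot a t) (Set.uIcc ϑ₀ ϑ) := by
      have hc1 : ContinuousOn (fun a : ℝ => ((a, t) : ℝ × ℝ)) (Set.uIcc ϑ₀ ϑ) :=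
        (continuous_id.prodMk continuous_const).continuousOn
      exact hxdotcont.comp hc1 (fun a ha => ⟨hsub ha, htI⟩)
    have hIInt : IntervalIntegrable (fun a => xdot a t) volume ϑ₀ ϑ :=
      hcontd.intervalIntegrable
    have hftc : ∫ a in ϑ₀..ϑ, xdot a t = x ϑ t - x ϑ₀ t := by
      apply intervalIntegral.integral_eq_sub_of_hasDerivAt
        (fun a ha => hxdot a (hsub ha) t htI) hIInt
    rw [← hftc]
    calc c * t * (ϑ - ϑ₀) = ∫ _ in ϑ₀..ϑ, c * t := by
          rw [intervalIntegral.integral_const, smul_eq_mul]; ring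
      _ ≤ _ := by
          apply intervalIntegral.integral_mono_on hle intervalIntegrable_const hIInt
          intro a ha
          exact hxdotlb a (Set.Icc_subset_Icc hϑ₀.1 hϑ.2 ha) t ht0 htδ
  -- squared pointwise lower bound, for all pairs
  have hsq : ∀ ϑ ∈ K, ∀ ϑ₀ ∈ K, ∀ t : ℝ, 0 ≤ t → t ≤ δ₀ →
      c ^ 2 * (ϑ - ϑ₀) ^ 2 * t ^ 2 ≤ (x ϑ t - x ϑ₀ t) ^ 2 := by
    intro ϑ hϑ ϑ₀ hϑ₀ t ht0 htδ
    have key : ∀ ϑ ∈ K, ∀ ϑ₀ ∈ K, ϑ₀ ≤ ϑ →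
        c ^ 2 * (ϑ - ϑ₀) ^ 2 * t ^ 2 ≤ (x ϑ t - x ϑ₀ t) ^ 2 := by
      intro a ha b hb hba
      have h1 := hdiff a ha b hb hba t ht0 htδ
      have h2 : 0 ≤ c * t * (a - b) := by
        apply mul_nonneg (mul_nonneg hcpos.le ht0); linarith
      calc c ^ 2 * (a - b) ^ 2 * t ^ 2 = (c * t * (a - b)) ^ 2 := by ring
        _ ≤ (x a t - x b t) ^ 2 := by
            apply sq_le_sq' <;> nlinarith
    rcases le_total ϑ₀ ϑ with h | h
    · exact key ϑ hϑ ϑ₀ hϑ₀ h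
    · have := key ϑ₀ hϑ₀ ϑ hϑ h
      calc c ^ 2 * (ϑ - ϑ₀) ^ 2 * t ^ 2 = c ^ 2 * (ϑ₀ - ϑ) ^ 2 * t ^ 2 := by ring
        _ ≤ (x ϑ₀ t - x ϑ t) ^ 2 := this
        _ = (x ϑ t - x ϑ₀ t) ^ 2 := by ring
  -- conclude
  refine ⟨δ₀, hδ₀pos, hδ₀T, ?_⟩
  intro δ hδ0 hδδ₀ ϑ hϑ ϑ₀ hϑ₀
  have hc2 : c ^ 2 = γ ^ 2 / 2 := by
    rw [hcdef, div_pow, Real.sq_sqrt (by norm_num : (0:ℝ) ≤ 2)]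
  have hcontx : ∀ a ∈ K, ContinuousOn (fun t => x a t) (Set.Icc 0 δ) := by
    intro a ha t ht
    have htI : t ∈ I := Set.mem_Icc.2 ⟨ht.1, le_trans ht.2 (le_trans hδδ₀ hδ₀T)⟩
    exact (hxode a ha t htI).continuousAt.continuousWithinAt
  have hIntsq : IntervalIntegrable (fun t => (x ϑ t - x ϑ₀ t) ^ 2) volume 0 δ := by
    apply ContinuousOn.intervalIntegrable
    rw [Set.uIcc_of_le hδ0.le]
    exact (((hcontx ϑ hϑ).sub (hcontx ϑ₀ hϑ₀)).pow 2)
  have hIntlow : IntervalIntegrable (fun t : ℝ => c ^ 2 * (ϑ - ϑ₀) ^ 2 * t ^ 2) volume 0 δ :=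
    ((continuous_const.mul (continuous_pow 2)).intervalIntegrable 0 δ)
  have hmono := intervalIntegral.integral_mono_on hδ0.le hIntlow hIntsq
    (fun t ht => hsq ϑ hϑ ϑ₀ hϑ₀ t ht.1 (le_trans ht.2 hδδ₀))
  have heval : ∫ t in (0:ℝ)..δ, c ^ 2 * (ϑ - ϑ₀) ^ 2 * t ^ 2
      = c ^ 2 * (ϑ - ϑ₀) ^ 2 * (δ ^ 3 / 3) := by
    have h2 : (∫ t in (0:ℝ)..δ, t ^ 2) = δ ^ 3 / 3 := by
      rw [integral_pow]; norm_num
    rw [intervalIntegral.integral_const_mul, h2]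
  calc γ ^ 2 * δ ^ 3 * (ϑ - ϑ₀) ^ 2 / 6 = c ^ 2 * (ϑ - ϑ₀) ^ 2 * (δ ^ 3 / 3) := by
        rw [hc2]; ring
    _ = ∫ t in (0:ℝ)..δ, c ^ 2 * (ϑ - ϑ₀) ^ 2 * t ^ 2 := heval.symm
    _ ≤ _ := hmono
end

section
/- Decomposition of Bayesian information: under the assumptions below, ∫_a^b ∫_Ω ( ∂/∂θ ln[ q(θ,ω) p(θ) ] )² q(θ,ω) p(θ) dμ(ω) dθ = ∫_a^b I(θ) p(θ) dθ + I_p, where I(θ) := ∫_Ω ( ∂q/∂θ (θ,ω) / q(θ,ω) )² q(θ,ω) dμ(ω) is the Fisher information at θ and I_p := ∫_a^b p'(θ)² / p(θ) dθ is the information of the prior. -/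
open Real MeasureTheory

/-- Decomposition of Bayesian information:
`∫_a^b ∫_Ω (∂_θ ln(qp))² q p dμ dθ = ∫_a^b I(θ) p(θ) dθ + I_p`, where the score of `q p` is
`∂_θ ln(q(θ,ω)p(θ)) = qθ(θ,ω)/q(θ,ω) + p'(θ)/p(θ)`, `I(θ) = ∫_Ω (qθ/q)² q dμ` is the Fisher
information at `θ` and `I_p = ∫_a^b p'(θ)²/p(θ) dθ` is the information of the prior. -/
theorem bayesian_information_decomposition
    {Ω : Type*} [MeasurableSpace Ω] (μ : Measure Ω) [SigmaFinite μ]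
    (a b : ℝ) (hab : a < b)
    (q qθ : ℝ → Ω → ℝ)
    (hqmeas : Measurable fun pr : ℝ × Ω => q pr.1 pr.2)
    (hqθmeas : Measurable fun pr : ℝ × Ω => qθ pr.1 pr.2)
    (hqpos : ∀ θ : ℝ, ∀ ω : Ω, 0 < q θ ω)
    (hqd : ∀ ω : Ω, ∀ θ : ℝ, HasDerivAt (fun θ' => q θ' ω) (qθ θ ω) θ)
    (hqdc : ∀ ω : Ω, Continuous fun θ => qθ θ ω)
    -- normalization and unbiasedness of the score:
    (hqnorm : ∀ θ ∈ Set.Icc a b, (∫ ω, q θ ω ∂μ) = 1)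
    (hqθint : ∀ θ ∈ Set.Icc a b, Integrable (fun ω => qθ θ ω) μ)
    (hscore : ∀ θ ∈ Set.Icc a b, (∫ ω, qθ θ ω ∂μ) = 0)
    (p : ℝ → ℝ) (hp1 : ContDiff ℝ 1 p) (hpa : p a = 0) (hpb : p b = 0)
    (hpnn : ∀ θ ∈ Set.Icc a b, 0 ≤ p θ) (hppos : ∀ θ ∈ Set.Ioo a b, 0 < p θ)
    (hpint : (∫ θ in a..b, p θ) = 1)
    -- finiteness of the Fisher information and of the prior information:
    (hI : ∀ θ ∈ Set.Icc a b, Integrable (fun ω => (qθ θ ω / q θ ω) ^ 2 * q θ ω) μ)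
    (hIpint : IntervalIntegrable
      (fun θ => (∫ ω, (qθ θ ω / q θ ω) ^ 2 * q θ ω ∂μ) * p θ) volume a b)
    (hIp : IntervalIntegrable (fun θ => (deriv p θ) ^ 2 / p θ) volume a b)
    -- applicability of Fubini's theorem:
    (hFub : Integrable
      (fun pr : ℝ × Ω =>
        (qθ pr.1 pr.2 / q pr.1 pr.2 + deriv p pr.1 / p pr.1) ^ 2 * q pr.1 pr.2 * p pr.1)
      ((volume.restrict (Set.Icc a b)).prod μ)) :
    (∫ θ in a..b, ∫ ω,
        (qθ θ ω / q θ ω + deriv p θ / p θ) ^ 2 * q θ ω * p θ ∂μ)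
      = (∫ θ in a..b, (∫ ω, (qθ θ ω / q θ ω) ^ 2 * q θ ω ∂μ) * p θ)
        + ∫ θ in a..b, (deriv p θ) ^ 2 / p θ := by
  have hqint : ∀ θ ∈ Set.Icc a b, Integrable (fun ω => q θ ω) μ := by
    intro θ hθ
    by_contra h
    have h1 := hqnorm θ hθ
    rw [integral_undef h] at h1
    norm_num at h1
  have key : ∀ θ ∈ Set.Icc a b,
      (∫ ω, (qθ θ ω / q θ ω + deriv p θ / p θ) ^ 2 * q θ ω * p θ ∂μ)
        = (∫ ω, (qθ θ ω / q θ ω) ^ 2 * q θ ω ∂μ) * p θ + (deriv p θ) ^ 2 / p θ := by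
    intro θ hθ
    set r := deriv p θ / p θ with hr
    have hpt : ∀ ω, (qθ θ ω / q θ ω + r) ^ 2 * q θ ω * p θ
        = (qθ θ ω / q θ ω) ^ 2 * q θ ω * p θ
          + ((2 * r * p θ) * qθ θ ω + (r ^ 2 * p θ) * q θ ω) := by
      intro ω
      have hq := (hqpos θ ω).ne'
      field_simp
      ring
    have i1 : Integrable (fun ω => (qθ θ ω / q θ ω) ^ 2 * q θ ω * p θ) μ :=
      (hI θ hθ).mul_const _
    have i2 : Integrable (fun ω => (2 * r * p θ) * qθ θ ω) μ :=
      (hqθint θ hθ).const_mul _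
    have i3 : Integrable (fun ω => (r ^ 2 * p θ) * q θ ω) μ :=
      (hqint θ hθ).const_mul _
    calc (∫ ω, (qθ θ ω / q θ ω + r) ^ 2 * q θ ω * p θ ∂μ)
        = ∫ ω, (qθ θ ω / q θ ω) ^ 2 * q θ ω * p θ
            + ((2 * r * p θ) * qθ θ ω + (r ^ 2 * p θ) * q θ ω) ∂μ := by
          simp only [hpt]
      _ = (∫ ω, (qθ θ ω / q θ ω) ^ 2 * q θ ω * p θ ∂μ)
            + ((∫ ω, (2 * r * p θ) * qθ θ ω ∂μ) + (∫ ω, (r ^ 2 * p θ) * q θ ω ∂μ)) := by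
          have i23 : Integrable
              (fun ω => (2 * r * p θ) * qθ θ ω + (r ^ 2 * p θ) * q θ ω) μ := i2.add i3
          rw [integral_add i1 i23, integral_add i2 i3]
      _ = (∫ ω, (qθ θ ω / q θ ω) ^ 2 * q θ ω ∂μ) * p θ
            + ((2 * r * p θ) * (∫ ω, qθ θ ω ∂μ) + (r ^ 2 * p θ) * (∫ ω, q θ ω ∂μ)) := by
          rw [integral_mul_const, integral_const_mul, integral_const_mul]
      _ = (∫ ω, (qθ θ ω / q θ ω) ^ 2 * q θ ω ∂μ) * p θ + r ^ 2 * p θ := by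
          rw [hscore θ hθ, hqnorm θ hθ]; ring
      _ = (∫ ω, (qθ θ ω / q θ ω) ^ 2 * q θ ω ∂μ) * p θ + (deriv p θ) ^ 2 / p θ := by
          rcases eq_or_ne (p θ) 0 with hp0 | hp0
          · simp [hr, hp0]
          · rw [hr]; field_simp
  have hEq : Set.EqOn
      (fun θ => ∫ ω, (qθ θ ω / q θ ω + deriv p θ / p θ) ^ 2 * q θ ω * p θ ∂μ)
      (fun θ => (∫ ω, (qθ θ ω / q θ ω) ^ 2 * q θ ω ∂μ) * p θ + (deriv p θ) ^ 2 / p θ)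
      (Set.uIcc a b) := by
    rw [Set.uIcc_of_le hab.le]
    exact fun θ hθ => key θ hθ
  rw [intervalIntegral.integral_congr hEq, intervalIntegral.integral_add hIpint hIp]
end
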